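/- Let n ≥ 1, let D₁, …, D_n ∈ {0, 1} with n₁ := Σ_i D_i satisfying 0 < n₁ < n, and set p := n₁/n. Let Y₁, …, Y_n ∈ ℝ and h₁, …, h_n ∈ ℝ^d, and set h̃_i := h_i − (1/n)Σ_j h_j. For d ∈ {0, 1}, let n_d be the number of units with D_i = d, and suppose the within-arm sample covariance matrices V_d := (1/n_d)Σ_{i: D_i = d} h̃_i h̃_iᵀ − ((1/n_d)Σ_{i: D_i = d} h̃_i)((1/n_d)Σ_{i: D_i = d} h̃_i)ᵀ are invertible; define the within-arm slopes α̂_d := V_d⁻¹·[(1/n_d)Σ_{i: D_i = d} h̃_i Y_i − ((1/n_d)Σ_{i: D_i = d} h̃_i)((1/n_d)Σ_{i: D_i = d} Y_i)]. Then the least-squares problem min over (a, t, b₁, b₂) ∈ ℝ × ℝ × ℝ^d × ℝ^d of Σ_{i=1}^n (Y_i − a − t·D_i − b₁ᵀh̃_i − D_i·b₂ᵀh̃_i)² has a unique minimizer, and its D-coefficient t (the Lin estimator τ̂_L) satisfies τ̂_L = (Ȳ₁ − Ȳ₀) − ((1 − p)·α̂₁ + p·α̂₀)ᵀ(h̄₁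 − h̄₀), where Ȳ_d and h̄_d are the within-arm means of Y_i and h_i. -/

import Mathlib

open Matrix
open scoped BigOperators


lemma swap_sum {n dd : ℕ} (g : Fin dd → ℝ) (F : Fin n → Fin dd → ℝ) :
    ∑ i, ∑ r, g r * F i r = ∑ r, g r * ∑ i, F i r := by
  rw [Finset.sum_comm]
  exact Finset.sum_congr rfl fun r _ => by rw [Finset.mul_sum]

lemma arm_min {n dd : ℕ} (w : Fin n → ℝ) (hw : ∀ i, w i = 0 ∨ w i = 1)
    (W : ℝ) (hWsum : (∑ i, w i) = W) (hWpos : 0 < W)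
    (x : Fin n → Fin dd → ℝ) (Y : Fin n → ℝ)
    (V : Matrix (Fin dd) (Fin dd) ℝ)
    (hV : ∀ r s, V r s = (∑ i, w i * (x i r * x i s)) / W
        - ((∑ i, w i * x i r) / W) * ((∑ i, w i * x i s) / W))
    (hVu : IsUnit V)
    (α : Fin dd → ℝ)
    (hα : α = V⁻¹ *ᵥ fun r => (∑ i, w i * (x i r * Y i)) / W
        - ((∑ i, w i * x i r) / W) * ((∑ i, w i * Y i) / W))
    (cs : ℝ)
    (hcs : cs = (∑ i, w i * Y i) / W - ∑ r, α r * ((∑ i, w i * x i r) / W))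
    (c : ℝ) (β : Fin dd → ℝ) :
    (∑ i, w i * (Y i - cs - ∑ r, α r * x i r) ^ 2)
      ≤ ∑ i, w i * (Y i - c - ∑ r, β r * x i r) ^ 2
    ∧ ((∑ i, w i * (Y i - c - ∑ r, β r * x i r) ^ 2)
        ≤ ∑ i, w i * (Y i - cs - ∑ r, α r * x i r) ^ 2 → c = cs ∧ β = α) := by
  have hW0 : W ≠ 0 := ne_of_gt hWpos
  set ρ : Fin n → ℝ := fun i => Y i - cs - ∑ r, α r * x i r with hρ
  set e : Fin n → ℝ := fun i => (c - cs) + ∑ r, (β r - α r) * x i r with he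
  -- residual decomposition
  have hres : ∀ i, Y i - c - ∑ r, β r * x i r = ρ i - e i := by
    intro i
    have hsub : ∑ r, (β r - α r) * x i r = ∑ r, β r * x i r - ∑ r, α r * x i r := by
      rw [← Finset.sum_sub_distrib]; exact Finset.sum_congr rfl fun r _ => by ring
    show _ = (Y i - cs - ∑ r, α r * x i r) - ((c - cs) + ∑ r, (β r - α r) * x i r)
    rw [hsub]; ring
  -- T = ∑ r, α r * SX r, with hT : T = (SY/W - cs) * W
  have hT : (∑ r, α r * ∑ i, w i * x i r)
      = ((∑ i, w i * Y i) / W - cs) * W := by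
    have hdiv : ∑ r, α r * ((∑ i, w i * x i r) / W)
        = (∑ r, α r * ∑ i, w i * x i r) / W := by
      rw [Finset.sum_div]; exact Finset.sum_congr rfl fun r _ => (mul_div_assoc _ _ _).symm
    have h1 : (∑ r, α r * ∑ i, w i * x i r) / W = (∑ i, w i * Y i) / W - cs := by
      rw [← hdiv, hcs]; ring
    field_simp at h1
    rw [h1]; field_simp
  -- V *ᵥ α = covariance vector
  have hVα : ∀ r, ∑ s, V r s * α s
      = (∑ i, w i * (x i r * Y i)) / W
        - ((∑ i, w i * x i r) / W) * ((∑ i, w i * Y i) / W) := by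
    intro r
    have hfun : V *ᵥ α = fun r => (∑ i, w i * (x i r * Y i)) / W
        - ((∑ i, w i * x i r) / W) * ((∑ i, w i * Y i) / W) := by
      rw [hα, Matrix.mulVec_mulVec,
        Matrix.mul_nonsing_inv _ ((Matrix.isUnit_iff_isUnit_det V).mp hVu), Matrix.one_mulVec]
    have := congrFun hfun r
    simpa [Matrix.mulVec, dotProduct] using this
  -- key2 : ∑ s, α s * SXX r s = SXY r - cs * SX r
  have key2 : ∀ r, ∑ s, α s * (∑ i, w i * (x i r * x i s))
      = (∑ i, w i * (x i r * Y i)) - cs * (∑ i, w i * x i r) := by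
    intro r
    have hL : ∑ s, V r s * α s
        = (∑ s, α s * ∑ i, w i * (x i r * x i s)) / W
          - ((∑ i, w i * x i r) / W) * ((∑ s, α s * ∑ i, w i * x i s) / W) := by
      have hpt : ∀ s, V r s * α s = (α s * ∑ i, w i * (x i r * x i s)) / W
          - ((∑ i, w i * x i r) / W) * ((α s * ∑ i, w i * x i s) / W) := by
        intro s; rw [hV]; ring
      rw [Finset.sum_congr rfl fun s _ => hpt s, Finset.sum_sub_distrib, ← Finset.sum_div,
        ← Finset.mul_sum, ← Finset.sum_div]
    have h1 := hVα r
    rw [hL, hT] at h1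
    have h2 := h1
    field_simp at h2
    have h3 : (W * W) * (∑ s, α s * (∑ i, w i * (x i r * x i s)))
        = (W * W) * ((∑ i, w i * (x i r * Y i)) - cs * (∑ i, w i * x i r)) := by
      simp only [← mul_assoc] at h2 ⊢
      linear_combination W * h2
    exact mul_left_cancel₀ (mul_ne_zero hW0 hW0) h3
  -- weighted residual sums vanish
  have hsum0 : ∑ i, w i * ρ i = 0 := by
    have pt : ∀ i, w i * ρ i = w i * Y i - cs * w i - ∑ r, α r * (w i * x i r) := by
      intro i
      have hmul : w i * ∑ r, α r * x i r = ∑ r, α r * (w i * x i r) := by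
        rw [Finset.mul_sum]; exact Finset.sum_congr rfl fun r _ => by ring
      show w i * (Y i - cs - ∑ r, α r * x i r) = _
      rw [mul_sub, mul_sub, hmul]; ring
    rw [Finset.sum_congr rfl fun i _ => pt i, Finset.sum_sub_distrib, Finset.sum_sub_distrib,
      ← Finset.mul_sum, hWsum, swap_sum α (fun i r => w i * x i r), hT]
    field_simp
    ring
  have hsum1 : ∀ r, ∑ i, w i * (ρ i * x i r) = 0 := by
    intro r
    have pt : ∀ i, w i * (ρ i * x i r) = w i * (x i r * Y i) - cs * (w i * x i r)
        - ∑ s, α s * (w i * (x i r * x i s)) := by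
      intro i
      have hmul : w i * ((∑ s, α s * x i s) * x i r)
          = ∑ s, α s * (w i * (x i r * x i s)) := by
        rw [Finset.sum_mul, Finset.mul_sum]
        exact Finset.sum_congr rfl fun s _ => by ring
      show w i * ((Y i - cs - ∑ s, α s * x i s) * x i r) = _
      rw [sub_mul, sub_mul, mul_sub, mul_sub, hmul]; ring
    rw [Finset.sum_congr rfl fun i _ => pt i, Finset.sum_sub_distrib, Finset.sum_sub_distrib,
      ← Finset.mul_sum, swap_sum α (fun i s => w i * (x i r * x i s)), key2 r]
    ring
  -- orthogonality
  have horth : ∑ i, w i * (ρ i * e i) = 0 := by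
    have pt : ∀ i, w i * (ρ i * e i)
        = (c - cs) * (w i * ρ i) + ∑ r, (β r - α r) * (w i * (ρ i * x i r)) := by
      intro i
      have hmul : w i * (ρ i * ∑ r, (β r - α r) * x i r)
          = ∑ r, (β r - α r) * (w i * (ρ i * x i r)) := by
        rw [Finset.mul_sum, Finset.mul_sum]
        exact Finset.sum_congr rfl fun r _ => by ring
      show w i * (ρ i * ((c - cs) + ∑ r, (β r - α r) * x i r)) = _
      rw [mul_add, mul_add, hmul]; ring
    rw [Finset.sum_congr rfl fun i _ => pt i, Finset.sum_add_distrib, ← Finset.mul_sum, hsum0,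
      swap_sum (fun r => β r - α r) (fun i r => w i * (ρ i * x i r))]
    simp [hsum1]
  -- decomposition
  have hdecomp : ∑ i, w i * (Y i - c - ∑ r, β r * x i r) ^ 2
      = (∑ i, w i * ρ i ^ 2) + ∑ i, w i * e i ^ 2 := by
    have pt : ∀ i, w i * (Y i - c - ∑ r, β r * x i r) ^ 2
        = w i * ρ i ^ 2 + w i * e i ^ 2 - 2 * (w i * (ρ i * e i)) := by
      intro i; rw [hres i]; ring
    rw [Finset.sum_congr rfl fun i _ => pt i, Finset.sum_sub_distrib, Finset.sum_add_distrib,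
      ← Finset.mul_sum, horth]
    ring
  have hwnn : ∀ i, 0 ≤ w i := fun i => by rcases hw i with h | h <;> simp [h]
  have he2nn : ∀ i ∈ (Finset.univ : Finset (Fin n)), 0 ≤ w i * e i ^ 2 :=
    fun i _ => mul_nonneg (hwnn i) (sq_nonneg _)
  have hsumnn : 0 ≤ ∑ i, w i * e i ^ 2 := Finset.sum_nonneg he2nn
  constructor
  · rw [hdecomp]; simp only [hρ]; linarith
  · intro hle
    rw [hdecomp] at hle
    have hzero : ∑ i, w i * e i ^ 2 = 0 := by simp only [hρ] at hle ⊢; linarith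
    have hei : ∀ i, w i * e i = 0 := by
      intro i
      have hz := (Finset.sum_eq_zero_iff_of_nonneg he2nn).mp hzero i (Finset.mem_univ i)
      rcases hw i with h | h
      · simp [h]
      · rw [h, one_mul] at hz ⊢
        exact pow_eq_zero_iff (two_ne_zero) |>.mp hz
    have hs0' : (c - cs) * W + ∑ r, (β r - α r) * ∑ i, w i * x i r = 0 := by
      have hs0 : ∑ i, w i * e i = 0 := by simp [hei]
      rw [← hs0]
      have pt : ∀ i, w i * e i = (c - cs) * w i + ∑ r, (β r - α r) * (w i * x i r) := by
        intro i
        have hmul : w i * ∑ r, (β r - α r) * x i r = ∑ r, (β r - α r) * (w i * x i r) := by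
          rw [Finset.mul_sum]; exact Finset.sum_congr rfl fun r _ => by ring
        show w i * ((c - cs) + ∑ r, (β r - α r) * x i r) = _
        rw [mul_add, hmul]; ring
      rw [Finset.sum_congr rfl fun i _ => pt i, Finset.sum_add_distrib, ← Finset.mul_sum, hWsum,
        swap_sum (fun r => β r - α r) (fun i r => w i * x i r)]
    have hs1 : ∀ r, (c - cs) * (∑ i, w i * x i r)
        + ∑ s, (β s - α s) * ∑ i, w i * (x i r * x i s) = 0 := by
      intro r
      have hz : ∑ i, w i * (e i * x i r) = 0 := by
        refine Finset.sum_eq_zero fun i _ => ?_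
        have h1 := hei i
        calc w i * (e i * x i r) = (w i * e i) * x i r := by ring
        _ = 0 := by rw [h1]; ring
      rw [← hz]
      have pt : ∀ i, w i * (e i * x i r) = (c - cs) * (w i * x i r)
          + ∑ s, (β s - α s) * (w i * (x i r * x i s)) := by
        intro i
        have hmul : w i * ((∑ s, (β s - α s) * x i s) * x i r)
            = ∑ s, (β s - α s) * (w i * (x i r * x i s)) := by
          rw [Finset.sum_mul, Finset.mul_sum]
          exact Finset.sum_congr rfl fun s _ => by ring
        show w i * (((c - cs) + ∑ s, (β s - α s) * x i s) * x i r) = _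
        rw [add_mul, mul_add, hmul]; ring
      rw [Finset.sum_congr rfl fun i _ => pt i, Finset.sum_add_distrib, ← Finset.mul_sum,
        swap_sum (fun s => β s - α s) (fun i s => w i * (x i r * x i s))]
    -- V *ᵥ (β - α) = 0
    have hVδ : V *ᵥ (β - α) = 0 := by
      funext r
      show ∑ s, V r s * (β s - α s) = 0
      have hL : ∑ s, V r s * (β s - α s)
          = (∑ s, (β s - α s) * ∑ i, w i * (x i r * x i s)) / W
            - ((∑ i, w i * x i r) / W) * ((∑ s, (β s - α s) * ∑ i, w i * x i s) / W) := by
        have hpt : ∀ s, V r s * (β s - α s)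
            = ((β s - α s) * ∑ i, w i * (x i r * x i s)) / W
              - ((∑ i, w i * x i r) / W) * (((β s - α s) * ∑ i, w i * x i s) / W) := by
          intro s; rw [hV]; ring
        rw [Finset.sum_congr rfl fun s _ => hpt s, Finset.sum_sub_distrib, ← Finset.sum_div,
          ← Finset.mul_sum, ← Finset.sum_div]
      have hA : ∑ s, (β s - α s) * ∑ i, w i * x i s = -((c - cs) * W) := by linarith [hs0']
      have hB : ∑ s, (β s - α s) * ∑ i, w i * (x i r * x i s)
          = -((c - cs) * (∑ i, w i * x i r)) := by linarith [hs1 r]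
      rw [hL, hA, hB]
      field_simp
      ring
    have hβ : β = α := by
      have h1 := congrArg (V⁻¹ *ᵥ ·) hVδ
      simp only [Matrix.mulVec_mulVec,
        Matrix.nonsing_inv_mul _ ((Matrix.isUnit_iff_isUnit_det V).mp hVu), Matrix.one_mulVec,
        Matrix.mulVec_zero] at h1
      exact sub_eq_zero.mp h1
    refine ⟨?_, hβ⟩
    rw [hβ] at hs0'
    simp only [sub_self, zero_mul, Finset.sum_const_zero, add_zero] at hs0'
    rcases mul_eq_zero.mp hs0' with h | h
    · linarith [sub_eq_zero.mp h]
    · exact absurd h hW0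


/-- **Finite-sample representation of the Lin estimator** (proof of Theorem 3.1 of the
paper). The interacted least-squares problem
`min over (a, t, b₁, b₂) of Σᵢ (Yᵢ − a − t·Dᵢ − b₁ᵀh̃ᵢ − Dᵢ·b₂ᵀh̃ᵢ)²`
has a unique minimizer when the within-arm sample covariance matrices `V₁, V₀` of the
demeaned covariates are invertible, and its `D`-coefficient equals
`(Ȳ₁ − Ȳ₀) − ((1 − p)α̂₁ + p·α̂₀)ᵀ(h̄₁ − h̄₀)`. -/
theorem lin_estimator_representation
    (n : ℕ) (hn : 1 ≤ n) (dd : ℕ)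
    (D : Fin n → ℝ) (hD01 : ∀ i, D i = 0 ∨ D i = 1)
    (n₁ : ℝ) (hn₁ : n₁ = ∑ i, D i) (hpos : 0 < n₁) (hlt : n₁ < n)
    (Y : Fin n → ℝ) (h : Fin n → Fin dd → ℝ) :
    let p : ℝ := n₁ / n
    let n₀ : ℝ := (n : ℝ) - n₁
    let htil : Fin n → Fin dd → ℝ := fun i r => h i r - (1 / (n : ℝ)) * ∑ j, h j r
    let V₁ : Matrix (Fin dd) (Fin dd) ℝ := Matrix.of fun r s =>
      (∑ i, D i * (htil i r * htil i s)) / n₁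
        - ((∑ i, D i * htil i r) / n₁) * ((∑ i, D i * htil i s) / n₁)
    let V₀ : Matrix (Fin dd) (Fin dd) ℝ := Matrix.of fun r s =>
      (∑ i, (1 - D i) * (htil i r * htil i s)) / n₀
        - ((∑ i, (1 - D i) * htil i r) / n₀) * ((∑ i, (1 - D i) * htil i s) / n₀)
    let α₁ : Fin dd → ℝ := V₁⁻¹ *ᵥ fun r =>
      (∑ i, D i * (htil i r * Y i)) / n₁
        - ((∑ i, D i * htil i r) / n₁) * ((∑ i, D i * Y i) / n₁)
    let α₀ : Fin dd → ℝ := V₀⁻¹ *ᵥ fun r =>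
      (∑ i, (1 - D i) * (htil i r * Y i)) / n₀
        - ((∑ i, (1 - D i) * htil i r) / n₀) * ((∑ i, (1 - D i) * Y i) / n₀)
    let Ybar1 : ℝ := (∑ i, D i * Y i) / n₁
    let Ybar0 : ℝ := (∑ i, (1 - D i) * Y i) / n₀
    let hbar1 : Fin dd → ℝ := fun r => (∑ i, D i * h i r) / n₁
    let hbar0 : Fin dd → ℝ := fun r => (∑ i, (1 - D i) * h i r) / n₀
    let Q : ℝ × ℝ × (Fin dd → ℝ) × (Fin dd → ℝ) → ℝ := fun q =>
      ∑ i, (Y i - q.1 - q.2.1 * D i - (∑ r, q.2.2.1 r * htil i r)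
        - D i * ∑ r, q.2.2.2 r * htil i r) ^ 2
    IsUnit V₁ → IsUnit V₀ →
      (∃! q : ℝ × ℝ × (Fin dd → ℝ) × (Fin dd → ℝ), ∀ q', Q q ≤ Q q') ∧
      (∀ q : ℝ × ℝ × (Fin dd → ℝ) × (Fin dd → ℝ), (∀ q', Q q ≤ Q q') →
        q.2.1 = (Ybar1 - Ybar0)
          - ∑ r, ((1 - p) * α₁ r + p * α₀ r) * (hbar1 r - hbar0 r)) := by
  intro p n₀ htil V₁ V₀ α₁ α₀ Ybar1 Ybar0 hbar1 hbar0 Q hV1u hV0u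
  have hnR : (0 : ℝ) < (n : ℝ) := by exact_mod_cast Nat.lt_of_lt_of_le Nat.zero_lt_one hn
  have hn0 : (n : ℝ) ≠ 0 := ne_of_gt hnR
  have hn₁0 : n₁ ≠ 0 := ne_of_gt hpos
  have hn₀pos : (0 : ℝ) < n₀ := by show (0:ℝ) < (n:ℝ) - n₁; linarith
  have hn₀0 : n₀ ≠ 0 := ne_of_gt hn₀pos
  have hw0 : ∀ i, (1 - D i : ℝ) = 0 ∨ (1 - D i : ℝ) = 1 := by
    intro i; rcases hD01 i with hd | hd <;> rw [hd] <;> norm_num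
  have hWsum0 : (∑ i, (1 - D i : ℝ)) = n₀ := by
    show _ = (n : ℝ) - n₁
    rw [Finset.sum_sub_distrib, hn₁]
    simp
  -- arm intercepts
  set cs1 : ℝ := Ybar1 - ∑ r, α₁ r * ((∑ i, D i * htil i r) / n₁) with hcs1def
  set cs0 : ℝ := Ybar0 - ∑ r, α₀ r * ((∑ i, (1 - D i) * htil i r) / n₀) with hcs0def
  have A1 : ∀ c β, (∑ i, D i * (Y i - cs1 - ∑ r, α₁ r * htil i r) ^ 2)
      ≤ ∑ i, D i * (Y i - c - ∑ r, β r * htil i r) ^ 2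
    ∧ ((∑ i, D i * (Y i - c - ∑ r, β r * htil i r) ^ 2)
        ≤ ∑ i, D i * (Y i - cs1 - ∑ r, α₁ r * htil i r) ^ 2 → c = cs1 ∧ β = α₁) :=
    fun c β => arm_min D hD01 n₁ hn₁.symm hpos htil Y V₁ (fun r s => rfl) hV1u α₁ rfl cs1
      hcs1def c β
  have A0 : ∀ c β, (∑ i, (1 - D i) * (Y i - cs0 - ∑ r, α₀ r * htil i r) ^ 2)
      ≤ ∑ i, (1 - D i) * (Y i - c - ∑ r, β r * htil i r) ^ 2
    ∧ ((∑ i, (1 - D i) * (Y i - c - ∑ r, β r * htil i r) ^ 2)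
        ≤ ∑ i, (1 - D i) * (Y i - cs0 - ∑ r, α₀ r * htil i r) ^ 2 → c = cs0 ∧ β = α₀) :=
    fun c β => arm_min (fun i => 1 - D i) hw0 n₀ hWsum0 hn₀pos htil Y V₀ (fun r s => rfl)
      hV0u α₀ rfl cs0 hcs0def c β
  -- decomposition of Q into the two arms
  have hQ : ∀ q : ℝ × ℝ × (Fin dd → ℝ) × (Fin dd → ℝ), Q q
      = (∑ i, D i * (Y i - (q.1 + q.2.1) - ∑ r, (q.2.2.1 r + q.2.2.2 r) * htil i r) ^ 2)
        + ∑ i, (1 - D i) * (Y i - q.1 - ∑ r, q.2.2.1 r * htil i r) ^ 2 := by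
    intro q
    show (∑ i, (Y i - q.1 - q.2.1 * D i - (∑ r, q.2.2.1 r * htil i r)
        - D i * ∑ r, q.2.2.2 r * htil i r) ^ 2) = _
    rw [← Finset.sum_add_distrib]
    refine Finset.sum_congr rfl fun i _ => ?_
    have hsum : ∑ r, (q.2.2.1 r + q.2.2.2 r) * htil i r
        = (∑ r, q.2.2.1 r * htil i r) + ∑ r, q.2.2.2 r * htil i r := by
      rw [← Finset.sum_add_distrib]; exact Finset.sum_congr rfl fun r _ => by ring
    rw [hsum]
    rcases hD01 i with hd | hd <;> rw [hd] <;> ring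
  -- the candidate minimizer
  set qs : ℝ × ℝ × (Fin dd → ℝ) × (Fin dd → ℝ) :=
    (cs0, cs1 - cs0, α₀, fun r => α₁ r - α₀ r) with hqsdef
  have hQs : Q qs = (∑ i, D i * (Y i - cs1 - ∑ r, α₁ r * htil i r) ^ 2)
      + ∑ i, (1 - D i) * (Y i - cs0 - ∑ r, α₀ r * htil i r) ^ 2 := by
    rw [hQ qs]
    congr 1
    refine Finset.sum_congr rfl fun i _ => ?_
    have hsum : ∑ r, (α₀ r + (α₁ r - α₀ r)) * htil i r = ∑ r, α₁ r * htil i r :=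
      Finset.sum_congr rfl fun r _ => by ring
    show D i * (Y i - (cs0 + (cs1 - cs0)) - ∑ r, (α₀ r + (α₁ r - α₀ r)) * htil i r) ^ 2 = _
    rw [hsum]; ring
  have hmin : ∀ q', Q qs ≤ Q q' := by
    intro q'
    rw [hQs, hQ q']
    exact add_le_add (A1 (q'.1 + q'.2.1) (fun r => q'.2.2.1 r + q'.2.2.2 r)).1
      (A0 q'.1 q'.2.2.1).1
  have hchar : ∀ q : ℝ × ℝ × (Fin dd → ℝ) × (Fin dd → ℝ), (∀ q', Q q ≤ Q q') → q = qs := by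
    intro q hq
    have hle := hq qs
    rw [hQ q, hQs] at hle
    have h1le := (A1 (q.1 + q.2.1) (fun r => q.2.2.1 r + q.2.2.2 r)).1
    have h0le := (A0 q.1 q.2.2.1).1
    obtain ⟨hc1, hb1⟩ := (A1 (q.1 + q.2.1) (fun r => q.2.2.1 r + q.2.2.2 r)).2 (by linarith)
    obtain ⟨hc0, hb0⟩ := (A0 q.1 q.2.2.1).2 (by linarith)
    obtain ⟨a, t, b1, b2⟩ := q
    dsimp only at hc1 hb1 hc0 hb0
    rw [hqsdef]
    have ht : t = cs1 - cs0 := by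
      linarith
    have hb2 : b2 = fun r => α₁ r - α₀ r := by
      funext r
      have h1 := congrFun hb1 r
      have h0 := congrFun hb0 r
      rw [← h1, ← h0]; ring
    rw [hc0, ht, hb0, hb2]
  constructor
  · exact ⟨qs, hmin, fun y hy => hchar y hy⟩
  · intro q hq
    rw [hchar q hq]
    show cs1 - cs0 = (Ybar1 - Ybar0) - ∑ r, ((1 - p) * α₁ r + p * α₀ r) * (hbar1 r - hbar0 r)
    -- mean identities
    have hD1h : ∀ r, ∑ i, D i * h i r = n₁ * hbar1 r := by
      intro r; show _ = n₁ * ((∑ i, D i * h i r) / n₁); field_simp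
    have hD0h : ∀ r, ∑ i, (1 - D i) * h i r = n₀ * hbar0 r := by
      intro r; show _ = n₀ * ((∑ i, (1 - D i) * h i r) / n₀); field_simp
    have hsplit : ∀ r, ∑ j, h j r = n₁ * hbar1 r + n₀ * hbar0 r := by
      intro r
      have hdec : ∑ j, h j r = (∑ i, D i * h i r) + ∑ i, (1 - D i) * h i r := by
        rw [← Finset.sum_add_distrib]; exact Finset.sum_congr rfl fun i _ => by ring
      rw [hdec, hD1h r, hD0h r]
    have m1 : ∀ r, (∑ i, D i * htil i r) / n₁ = (1 - p) * (hbar1 r - hbar0 r) := by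
      intro r
      have hnum : ∑ i, D i * htil i r
          = ∑ i, D i * h i r - ((1 / (n : ℝ)) * ∑ j, h j r) * n₁ := by
        have pt : ∀ i, D i * htil i r
            = D i * h i r - ((1 / (n : ℝ)) * ∑ j, h j r) * D i := by
          intro i; show D i * (h i r - (1 / (n : ℝ)) * ∑ j, h j r) = _; ring
        rw [Finset.sum_congr rfl fun i _ => pt i, Finset.sum_sub_distrib, ← Finset.mul_sum,
          ← hn₁]
      rw [hnum, hD1h r, hsplit r]
      show _ = (1 - n₁ / n) * (hbar1 r - hbar0 r)
      have hn₀eq : n₀ = (n : ℝ) - n₁ := rfl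
      field_simp
      rw [hn₀eq]
      ring
    have m0 : ∀ r, (∑ i, (1 - D i) * htil i r) / n₀ = -(p * (hbar1 r - hbar0 r)) := by
      intro r
      have hnum : ∑ i, (1 - D i) * htil i r
          = ∑ i, (1 - D i) * h i r - ((1 / (n : ℝ)) * ∑ j, h j r) * n₀ := by
        have pt : ∀ i, (1 - D i) * htil i r
            = (1 - D i) * h i r - ((1 / (n : ℝ)) * ∑ j, h j r) * (1 - D i) := by
          intro i; show (1 - D i) * (h i r - (1 / (n : ℝ)) * ∑ j, h j r) = _; ring
        rw [Finset.sum_congr rfl fun i _ => pt i, Finset.sum_sub_distrib, ← Finset.mul_sum,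
          hWsum0]
      rw [hnum, hD0h r, hsplit r]
      show _ = -((n₁ / n) * (hbar1 r - hbar0 r))
      have hn₀eq : n₀ = (n : ℝ) - n₁ := rfl
      field_simp
      rw [hn₀eq]
      ring
    have hsumeq : ∑ r, ((1 - p) * α₁ r + p * α₀ r) * (hbar1 r - hbar0 r)
        = (∑ r, α₁ r * ((∑ i, D i * htil i r) / n₁))
          - ∑ r, α₀ r * ((∑ i, (1 - D i) * htil i r) / n₀) := by
      rw [← Finset.sum_sub_distrib]
      refine Finset.sum_congr rfl fun r _ => ?_
      rw [m1 r, m0 r]; ring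
    rw [hsumeq, hcs1def, hcs0def]
    ring
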